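/- arXiv:1711.10580 — 2 statements merged into one kernel-verified Lean document; each statement's English description precedes it below -/
import Mathlib

section
/- Let (R, m) be a commutative quasi-local ring with residue field F = R/m and m^3 = 0. Then R satisfies (⋄) if and only if for every F-linear map f : Soc(R) → F, the quotient m/V_f is a finite-dimensional F-vector space, where V_f = {a ∈ m : f(ma) = 0}. -/
open IsLocalRing

universe u v

theorem aux_mul_mem_soc {R : Type u} [CommRing R] [IsLocalRing R]
    (hm3 : maximalIdeal R ^ 3 = ⊥) {x a : R} (hx : x ∈ maximalIdeal R)
    (ha : a ∈ maximalIdeal R) : x * a ∈ (maximalIdeal R).annihilator := by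
  rw [Submodule.mem_annihilator]
  intro z hz
  have h1 : x * a ∈ maximalIdeal R ^ 2 := by
    rw [sq]; exact Ideal.mul_mem_mul hx ha
  have h2 : x * a * z ∈ maximalIdeal R ^ 3 := by
    have : (3 : ℕ) = 2 + 1 := rfl
    rw [this, pow_succ]
    exact Ideal.mul_mem_mul h1 hz
  rw [hm3] at h2
  simpa using h2

theorem aux_prod3 {R : Type u} [CommRing R] [IsLocalRing R]
    (hm3 : maximalIdeal R ^ 3 = ⊥) {x y z : R} (hx : x ∈ maximalIdeal R)
    (hy : y ∈ maximalIdeal R) (hz : z ∈ maximalIdeal R) : x * (y * z) = 0 := by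
  have := Submodule.mem_annihilator.mp (aux_mul_mem_soc hm3 hy hz) x hx
  rw [smul_eq_mul] at this
  rwa [mul_comm (y * z) x] at this

section
variable {R : Type u} [CommRing R] [IsLocalRing R]

def VfIdeal {R : Type u} [CommRing R] [IsLocalRing R] (hm3 : maximalIdeal R ^ 3 = ⊥)
    (f : ↥((maximalIdeal R).annihilator) →ₗ[R] R ⧸ maximalIdeal R) : Ideal R where
  carrier := {a : R | a ∈ maximalIdeal R ∧
    ∀ x, x ∈ maximalIdeal R →
      ∀ h : x * a ∈ (maximalIdeal R).annihilator, f ⟨x * a, h⟩ = 0}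
  zero_mem' := ⟨(maximalIdeal R).zero_mem, fun x _ h => by
    have : (⟨x * 0, h⟩ : ↥((maximalIdeal R).annihilator)) = 0 := Subtype.ext (mul_zero x)
    rw [this, map_zero]⟩
  add_mem' := by
    rintro a b ⟨ha1, ha2⟩ ⟨hb1, hb2⟩
    refine ⟨(maximalIdeal R).add_mem ha1 hb1, fun x hx h => ?_⟩
    have hxa := aux_mul_mem_soc hm3 hx ha1
    have hxb := aux_mul_mem_soc hm3 hx hb1
    have : (⟨x * (a + b), h⟩ : ↥((maximalIdeal R).annihilator)) = ⟨x * a, hxa⟩ + ⟨x * b, hxb⟩ :=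
      Subtype.ext (mul_add x a b)
    rw [this, map_add, ha2 x hx hxa, hb2 x hx hxb, add_zero]
  smul_mem' := by
    rintro r a ⟨ha1, ha2⟩
    refine ⟨by simpa using Ideal.mul_mem_left _ r ha1, fun x hx h => ?_⟩
    have hxr : x * r ∈ maximalIdeal R := Ideal.mul_mem_right r _ hx
    have hxa := aux_mul_mem_soc hm3 hxr ha1
    have : (⟨x * (r • a), h⟩ : ↥((maximalIdeal R).annihilator)) = ⟨x * r * a, hxa⟩ :=
      Subtype.ext (by show x * (r * a) = x * r * a; rw [mul_assoc])
    rw [this, ha2 (x * r) hxr hxa]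

theorem aux_semisimple {R : Type u} [CommRing R] [IsLocalRing R] {M : Type v} [AddCommGroup M]
    [Module R M] (htor : ∀ x ∈ maximalIdeal R, ∀ m : M, x • m = 0) :
    IsSemisimpleModule R M := by
  have hts : Module.IsTorsionBySet R M (maximalIdeal R : Set R) := fun x r => htor r.1 r.2 x
  letI := hts.module
  letI : Field (R ⧸ maximalIdeal R) := Ideal.Quotient.field _
  have : IsSemisimpleRing (R ⧸ maximalIdeal R) := inferInstance
  let l : M →ₛₗ[Ideal.Quotient.mk (maximalIdeal R)] M :=
    { toFun := id, map_add' := fun _ _ => rfl,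
      map_smul' := fun r x => (hts.mk_smul r x).symm }
  exact (LinearMap.isSemisimpleModule_iff_of_bijective l Function.bijective_id).mpr inferInstance

theorem aux_finite_of_artinian {R : Type u} [CommRing R] [IsLocalRing R] {M : Type v}
    [AddCommGroup M] [Module R M] (htor : ∀ x ∈ maximalIdeal R, ∀ m : M, x • m = 0)
    [IsArtinian R M] : Module.Finite R M := by
  have := aux_semisimple htor
  exact (IsSemisimpleModule.finite_tfae.out 0 2).mpr ‹_›

theorem aux_artinian_of_finite {R : Type u} [CommRing R] [IsLocalRing R] {M : Type v}
    [AddCommGroup M] [Module R M] (htor : ∀ x ∈ maximalIdeal R, ∀ m : M, x • m = 0)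
    [Module.Finite R M] : IsArtinian R M := by
  have := aux_semisimple htor
  infer_instance

section
variable {R : Type u} [CommRing R] [IsLocalRing R]

theorem aux_forward (hm3 : maximalIdeal R ^ 3 = ⊥)
    (hdia : ∀ I : Ideal R,
        (∃ S : Submodule R (R ⧸ I), IsSimpleModule R S ∧
          ∀ N : Submodule R (R ⧸ I), N ≠ ⊥ → S ⊓ N ≠ ⊥) →
        IsArtinian R (R ⧸ I))
    (f : ↥((maximalIdeal R).annihilator) →ₗ[R] R ⧸ maximalIdeal R) :
    ∃ s : Finset R, ↑s ⊆ (maximalIdeal R : Set R) ∧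
      (maximalIdeal R : Set R) ⊆ (Submodule.span R
        (({a : R | a ∈ maximalIdeal R ∧
    ∀ x, x ∈ maximalIdeal R →
      ∀ h : x * a ∈ (maximalIdeal R).annihilator, f ⟨x * a, h⟩ = 0}) ∪ ↑s) : Set R) := by
  classical
  by_cases hf0 : ∀ s, f s = 0
  · refine ⟨∅, by simp, ?_⟩
    intro a ha
    apply Submodule.subset_span
    exact Or.inl ⟨ha, fun x hx h => hf0 _⟩
  push_neg at hf0
  obtain ⟨s0, hs0⟩ := hf0
  set K : Ideal R := (LinearMap.ker f).map ((maximalIdeal R).annihilator).subtype with hK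
  have hKmem : ∀ (r : R) (hr : r ∈ ((maximalIdeal R).annihilator)), (r ∈ K ↔ f ⟨r, hr⟩ = 0) := by
    intro r hr
    constructor
    · rintro ⟨⟨r', hr'⟩, hker, rfl⟩
      exact hker
    · intro h0
      exact ⟨⟨r, hr⟩, h0, rfl⟩
  have hKSoc : K ≤ ((maximalIdeal R).annihilator) := by
    rintro r ⟨⟨r', hr'⟩, -, rfl⟩; exact hr'
  have hzorn := zorn_le_nonempty₀ {J : Ideal R | J ⊓ ((maximalIdeal R).annihilator) = K}
    ?_ K (inf_eq_left.mpr hKSoc)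
  rotate_left
  · intro c hcs hchain y hy
    refine ⟨sSup c, ?_, fun z hz => le_sSup hz⟩
    apply le_antisymm
    · intro x hx
      rw [Submodule.mem_inf] at hx
      obtain ⟨J, hJ, hxJ⟩ :=
        (Submodule.mem_sSup_of_directed ⟨y, hy⟩ hchain.directedOn).mp hx.1
      exact (hcs hJ) ▸ Submodule.mem_inf.mpr ⟨hxJ, hx.2⟩
    · have hK_le : K ≤ y := (hcs hy) ▸ inf_le_left
      exact le_inf (hK_le.trans (le_sSup hy)) hKSoc
  obtain ⟨I, hIK, hImax⟩ := hzorn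
  have hIs : I ⊓ ((maximalIdeal R).annihilator) = K := hImax.prop
  have hKI : K ≤ I := hIs ▸ inf_le_left
  have hs0I : (s0 : R) ∉ I := by
    intro h
    have : (s0 : R) ∈ K := hIs ▸ Submodule.mem_inf.mpr ⟨h, s0.2⟩
    exact hs0 (by simpa using (hKmem _ s0.2).mp this)
  have hITop : I ≠ ⊤ := fun h => hs0I (h ▸ Submodule.mem_top)
  have hIm : I ≤ maximalIdeal R := le_maximalIdeal hITop
  set S : Submodule R (R ⧸ I) := Submodule.map I.mkQ ((maximalIdeal R).annihilator) with hS
  have hscale : ∀ c d : R ⧸ maximalIdeal R, d ≠ 0 → ∃ r : R, r • d = c := by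
    intro c d hd
    obtain ⟨b, rfl⟩ := Submodule.Quotient.mk_surjective _ d
    obtain ⟨e, rfl⟩ := Submodule.Quotient.mk_surjective _ c
    have hb : IsUnit b := by
      by_contra hb
      exact hd ((Submodule.Quotient.mk_eq_zero _).mpr ((mem_maximalIdeal b).mpr hb))
    obtain ⟨u, rfl⟩ := hb
    refine ⟨e * ↑u⁻¹, ?_⟩
    rw [← Submodule.Quotient.mk_smul]
    congr 1
    rw [smul_eq_mul, mul_assoc, Units.inv_mul, mul_one]
  have hgen : ∀ t ∈ S, t ≠ 0 → S ≤ Submodule.span R {t} := by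
    intro t ht htne
    obtain ⟨a, haSoc, rfl⟩ := Submodule.mem_map.mp ht
    have haI : a ∉ I := fun h =>
      htne (by rw [Submodule.mkQ_apply, Submodule.Quotient.mk_eq_zero]; exact h)
    have hfa : f ⟨a, haSoc⟩ ≠ 0 := fun h0 => haI (hKI ((hKmem a haSoc).mpr h0))
    rintro t' ⟨a', ha'Soc, rfl⟩
    obtain ⟨r, hr⟩ := hscale (f ⟨a', ha'Soc⟩) (f ⟨a, haSoc⟩) hfa
    set σ : ↥((maximalIdeal R).annihilator) := ⟨a', ha'Soc⟩ - r • ⟨a, haSoc⟩ with hσ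
    have hfσ : f σ = 0 := by rw [hσ, map_sub, map_smul, hr, sub_self]
    have hσK : (σ : R) ∈ K := (hKmem _ σ.2).mpr (by rw [Subtype.coe_eta]; exact hfσ)
    have hσI : a' - r * a ∈ I := hKI hσK
    have : I.mkQ a' = r • I.mkQ a := by
      rw [Submodule.mkQ_apply, Submodule.mkQ_apply, ← Submodule.Quotient.mk_smul,
        Submodule.Quotient.eq]
      exact hσI
    rw [this]
    exact Submodule.smul_mem _ r (Submodule.mem_span_singleton_self _)
  have hSne : S ≠ ⊥ := by
    rw [Submodule.ne_bot_iff]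
    refine ⟨I.mkQ s0, Submodule.mem_map_of_mem s0.2, ?_⟩
    rw [Submodule.mkQ_apply, Ne, Submodule.Quotient.mk_eq_zero]
    exact hs0I
  have hatom : IsAtom S := by
    constructor
    · exact hSne
    · intro N hNS
      by_contra hN
      obtain ⟨x, hxN, hx0⟩ := Submodule.ne_bot_iff N |>.mp hN
      have : S ≤ Submodule.span R {x} := hgen x (hNS.le hxN) hx0
      exact absurd (this.trans ((Submodule.span_singleton_le_iff_mem x N).mpr hxN)) hNS.not_ge
  have hess : ∀ N : Submodule R (R ⧸ I), N ≠ ⊥ → S ⊓ N ≠ ⊥ := by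
    intro N hN
    set J := N.comap I.mkQ with hJ
    have hIJ : I ≤ J := by
      intro x hx
      show I.mkQ x ∈ N
      rw [Submodule.mkQ_apply, (Submodule.Quotient.mk_eq_zero I).mpr hx]
      exact N.zero_mem
    have hJI : ¬J ≤ I := by
      intro hle
      apply hN
      have hNJ : N = Submodule.map I.mkQ J :=
        (Submodule.map_comap_eq_of_surjective (Submodule.Quotient.mk_surjective I) N).symm
      have hJI' : J = I := le_antisymm hle hIJ
      rw [hNJ, hJI']
      ext x
      simp only [Submodule.mem_map, Submodule.mem_bot]
      constructor
      · rintro ⟨y, hy, rfl⟩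
        rw [Submodule.mkQ_apply, Submodule.Quotient.mk_eq_zero]; exact hy
      · rintro rfl
        exact ⟨0, I.zero_mem, map_zero _⟩
    have hJK : J ⊓ ((maximalIdeal R).annihilator) ≠ K := fun h => hJI (hImax.2 h hIJ)
    have hKle : K ≤ J ⊓ ((maximalIdeal R).annihilator) := le_inf (hKI.trans hIJ) hKSoc
    obtain ⟨x, hxJS, hxK⟩ := SetLike.exists_of_lt (lt_of_le_of_ne hKle (Ne.symm hJK))
    rw [Submodule.mem_inf] at hxJS
    rw [Submodule.ne_bot_iff]
    refine ⟨I.mkQ x, Submodule.mem_inf.mpr ⟨Submodule.mem_map_of_mem hxJS.2, hxJS.1⟩, ?_⟩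
    rw [Submodule.mkQ_apply, Ne, Submodule.Quotient.mk_eq_zero]
    intro hxI
    exact hxK (hIs ▸ Submodule.mem_inf.mpr ⟨hxI, hxJS.2⟩)
  haveI hart : IsArtinian R (R ⧸ I) := hdia I ⟨S, isSimpleModule_iff_isAtom.mpr hatom, hess⟩
  have hprod3 : ∀ {x y z : R}, x ∈ maximalIdeal R → y ∈ maximalIdeal R →
      z ∈ maximalIdeal R → x * (y * z) = 0 := by
    intro x y z hx hy hz
    have := Submodule.mem_annihilator.mp (aux_mul_mem_soc hm3 hy hz) x hx
    rw [smul_eq_mul] at this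
    rw [mul_comm (y * z) x] at this
    exact this
  set V := VfIdeal hm3 f with hV
  have hVm : (V : Ideal R) ≤ maximalIdeal R := fun b hb => hb.1
  set T : Submodule R (R ⧸ I) := Submodule.map I.mkQ (V : Ideal R) with hT
  set φ : R →ₗ[R] (R ⧸ I) ⧸ T := T.mkQ.comp I.mkQ with hφ
  have hIinterm : ∀ b, b ∈ I → b ∈ maximalIdeal R → b ∈ V := by
    intro b hbI hbm
    refine ⟨hbm, fun x hx h => ?_⟩
    have hxbK : x * b ∈ K := by
      rw [← hIs]
      exact Submodule.mem_inf.mpr ⟨Ideal.mul_mem_left _ x hbI, h⟩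
    exact (hKmem _ h).mp hxbK
  have hker : ∀ a, a ∈ maximalIdeal R → (φ a = 0 ↔ a ∈ V) := by
    intro a ha
    have hiff : φ a = 0 ↔ I.mkQ a ∈ T := by
      rw [hφ, LinearMap.comp_apply, Submodule.mkQ_apply, Submodule.Quotient.mk_eq_zero]
    rw [hiff]
    constructor
    · intro h0
      obtain ⟨v, hvV, hv⟩ := Submodule.mem_map.mp h0
      have hav : a - v ∈ I := by
        rw [← Submodule.Quotient.eq]
        rw [Submodule.mkQ_apply] at hv
        exact hv.symm
      have h1 : a - v ∈ V := hIinterm _ hav (Submodule.sub_mem _ ha (hVm hvV))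
      have := V.add_mem h1 hvV
      rwa [sub_add_cancel] at this
    · intro hv
      exact Submodule.mem_map_of_mem hv
  set P : Submodule R ((R ⧸ I) ⧸ T) := Submodule.map φ (maximalIdeal R) with hP
  have htorP : ∀ x ∈ maximalIdeal R, ∀ p : ↥P, x • p = 0 := by
    intro x hx p
    obtain ⟨a, ha, hpa⟩ := Submodule.mem_map.mp p.2
    have hxam : x * a ∈ maximalIdeal R := Ideal.mul_mem_left _ x ha
    have hxaV : x * a ∈ V := by
      refine ⟨hxam, fun y hy h => ?_⟩
      have hz : y * (x * a) = 0 := hprod3 hy hx ha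
      have : (⟨y * (x * a), h⟩ : ↥((maximalIdeal R).annihilator)) = 0 := Subtype.ext hz
      rw [this, map_zero]
    apply Subtype.ext
    show x • (p : (R ⧸ I) ⧸ T) = 0
    rw [← hpa, ← map_smul φ, smul_eq_mul]
    exact (hker _ hxam).mpr hxaV
  haveI : IsArtinian R ↥P := inferInstance
  haveI : Module.Finite R ↥P := aux_finite_of_artinian htorP
  obtain ⟨t, ht⟩ := Module.finite_def.mp ‹Module.Finite R ↥P›
  choose g hg1 hg2 using fun p : ↥P => Submodule.mem_map.mp p.2
  refine ⟨t.image g, ?_, ?_⟩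
  · intro a ha
    simp only [Finset.coe_image, Set.mem_image, Finset.mem_coe] at ha
    obtain ⟨p, -, rfl⟩ := ha
    exact hg1 p
  · intro a ha
    have hset : {a : R | a ∈ maximalIdeal R ∧
        ∀ x, x ∈ maximalIdeal R →
          ∀ h : x * a ∈ (maximalIdeal R).annihilator, f ⟨x * a, h⟩ = 0} = (V : Set R) := rfl
    rw [SetLike.mem_coe, hset, Submodule.span_union, Submodule.span_eq]
    have hpa : φ a ∈ P := Submodule.mem_map_of_mem ha
    have h1 : (⟨φ a, hpa⟩ : ↥P) ∈ Submodule.span R (↑t : Set ↥P) := by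
      rw [ht]; trivial
    have h2 : φ a ∈ Submodule.map P.subtype (Submodule.span R (↑t : Set ↥P)) :=
      ⟨_, h1, rfl⟩
    rw [Submodule.map_span] at h2
    have himg : (P.subtype '' ↑t : Set ((R ⧸ I) ⧸ T)) ⊆ φ '' ↑(t.image g) := by
      rintro _ ⟨p, hp, rfl⟩
      exact ⟨g p, by simp only [Finset.coe_image, Set.mem_image, Finset.mem_coe]; exact ⟨p, hp, rfl⟩, hg2 p⟩
    have h3 : φ a ∈ Submodule.span R (φ '' ↑(t.image g)) :=
      Submodule.span_mono himg h2
    rw [← Submodule.map_span] at h3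
    obtain ⟨w, hw, hwa⟩ := h3
    have hwm : w ∈ maximalIdeal R := by
      have hle : Submodule.span R (↑(t.image g) : Set R) ≤ maximalIdeal R := by
        rw [Submodule.span_le]
        intro b hb
        simp only [Finset.coe_image, Set.mem_image, Finset.mem_coe] at hb
        obtain ⟨p, -, rfl⟩ := hb
        exact hg1 p
      exact hle hw
    have hdiff : a - w ∈ V := (hker _ (Submodule.sub_mem _ ha hwm)).mp
      (by rw [map_sub, hwa, sub_self])
    have haw : a = (a - w) + w := (sub_add_cancel a w).symm
    rw [haw]
    exact Submodule.add_mem_sup hdiff hw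
end

section
variable {R : Type u} [CommRing R] [IsLocalRing R]

theorem aux_backward (hm3 : maximalIdeal R ^ 3 = ⊥)
    (hfin : ∀ f : ↥((maximalIdeal R).annihilator) →ₗ[R] R ⧸ maximalIdeal R,
        ∃ s : Finset R, ↑s ⊆ (maximalIdeal R : Set R) ∧
          (maximalIdeal R : Set R) ⊆ (Submodule.span R
            (({a : R | a ∈ maximalIdeal R ∧
              ∀ x, x ∈ maximalIdeal R →
                ∀ h : x * a ∈ (maximalIdeal R).annihilator, f ⟨x * a, h⟩ = 0}) ∪ ↑s) : Set R))
    (I : Ideal R)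
    (hex : ∃ S : Submodule R (R ⧸ I), IsSimpleModule R S ∧
          ∀ N : Submodule R (R ⧸ I), N ≠ ⊥ → S ⊓ N ≠ ⊥) :
    IsArtinian R (R ⧸ I) := by
  classical
  obtain ⟨S, hsimp, hess⟩ := hex
  have hatom : IsAtom S := isSimpleModule_iff_isAtom.mp hsimp
  -- m • S = ⊥
  have hmS : maximalIdeal R • S = ⊥ := by
    by_contra hne
    have hle : maximalIdeal R • S ≤ S := Submodule.smul_le_right
    have heq : maximalIdeal R • S = S := by
      rcases eq_or_lt_of_le hle with h | h
      · exact h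
      · exact absurd (hatom.2 _ h) hne
    have h3 : maximalIdeal R ^ 3 • S = S := by
      have : (3:ℕ) = 2 + 1 := rfl
      rw [this, pow_succ, sq, mul_smul, mul_smul, heq, heq, heq]
    rw [hm3, Submodule.bot_smul] at h3
    exact hatom.1 h3.symm
  have hmS' : ∀ x ∈ maximalIdeal R, ∀ v ∈ S, x • v = (0 : R ⧸ I) := by
    intro x hx v hv
    have : x • v ∈ maximalIdeal R • S := Submodule.smul_mem_smul hx hv
    rw [hmS] at this
    simpa using this
  -- elements killed by m lie in S
  have hsub : ∀ t : R ⧸ I, (∀ x ∈ maximalIdeal R, x • t = 0) → t ∈ S := by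
    intro t htor
    by_cases ht0 : t = 0
    · rw [ht0]; exact S.zero_mem
    have hspan : Submodule.span R {t} ≠ ⊥ := by
      rw [Submodule.ne_bot_iff]
      exact ⟨t, Submodule.mem_span_singleton_self t, ht0⟩
    obtain ⟨w, hwmem, hw0⟩ := Submodule.ne_bot_iff _ |>.mp (hess _ hspan)
    rw [Submodule.mem_inf] at hwmem
    obtain ⟨r, rfl⟩ := Submodule.mem_span_singleton.mp hwmem.2
    have hr : IsUnit r := by
      by_contra hr
      exact hw0 (htor r ((mem_maximalIdeal r).mpr hr))
    obtain ⟨c, rfl⟩ := hr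
    have : t = (↑c⁻¹ : R) • ((c : R) • t) := by
      rw [← mul_smul, Units.inv_mul, one_smul]
    rw [this]
    exact S.smul_mem _ hwmem.1
  -- I ≠ ⊤
  have hITop : I ≠ ⊤ := by
    intro h
    haveI : Subsingleton (R ⧸ I) := Submodule.Quotient.subsingleton_iff.mpr h
    exact hatom.1 (Subsingleton.elim S ⊥)
  have hIm : I ≤ maximalIdeal R := le_maximalIdeal hITop
  -- pick u
  obtain ⟨u, huS, hu0⟩ := Submodule.ne_bot_iff S |>.mp hatom.1
  have hspanu : Submodule.span R {u} = S := by
    rcases eq_or_lt_of_le ((Submodule.span_singleton_le_iff_mem u S).mpr huS) with h | h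
    · exact h
    · exact absurd (hatom.2 _ h) (by
        intro hb
        rw [Submodule.eq_bot_iff] at hb
        exact hu0 (hb u (Submodule.mem_span_singleton_self u)))
  -- the map e : R⧸m → R⧸I, r ↦ r • u
  have hkerle : maximalIdeal R ≤ LinearMap.ker (LinearMap.toSpanSingleton R (R ⧸ I) u) := by
    intro x hx
    rw [LinearMap.mem_ker, LinearMap.toSpanSingleton_apply]
    exact hmS' x hx u huS
  set e : (R ⧸ maximalIdeal R) →ₗ[R] R ⧸ I :=
    (maximalIdeal R).liftQ (LinearMap.toSpanSingleton R (R ⧸ I) u) hkerle with he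
  have he_apply : ∀ r : R, e (Submodule.Quotient.mk r) = r • u := fun r => rfl
  have he_inj : Function.Injective e := by
    rw [← LinearMap.ker_eq_bot]
    rw [Submodule.eq_bot_iff]
    intro c hc
    obtain ⟨r, rfl⟩ := Submodule.Quotient.mk_surjective _ c
    rw [LinearMap.mem_ker, he_apply] at hc
    rw [Submodule.Quotient.mk_eq_zero]
    by_contra hrm
    have hr : IsUnit r := by
      by_contra hr'
      exact hrm ((mem_maximalIdeal r).mpr hr')
    obtain ⟨c', rfl⟩ := hr
    apply hu0
    have : u = (↑c'⁻¹ : R) • ((c' : R) • u) := by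
      rw [← mul_smul, Units.inv_mul, one_smul]
    rw [this, hc, smul_zero]
  have he_range : LinearMap.range e = S := by
    rw [he, Submodule.range_liftQ, ← LinearMap.span_singleton_eq_range, hspanu]
  -- equivalence R⧸m ≃ S
  have hecod : ∀ c, e c ∈ S := fun c => he_range ▸ LinearMap.mem_range_self e c
  set eS : (R ⧸ maximalIdeal R) →ₗ[R] ↥S := e.codRestrict S hecod with heS
  have heS_bij : Function.Bijective eS := by
    constructor
    · intro a b hab
      exact he_inj (congrArg Subtype.val hab)
    · rintro ⟨v, hv⟩
      rw [← he_range] at hv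
      obtain ⟨c, hc⟩ := hv
      exact ⟨c, Subtype.ext hc⟩
  set eq2 : (R ⧸ maximalIdeal R) ≃ₗ[R] ↥S := LinearEquiv.ofBijective eS heS_bij with heq2
  set ψ : ↥((maximalIdeal R).annihilator) →ₗ[R] R ⧸ I :=
    I.mkQ.comp ((maximalIdeal R).annihilator).subtype with hψ
  have hψS : ∀ σ : ↥((maximalIdeal R).annihilator), ψ σ ∈ S := by
    intro σ
    apply hsub
    intro x hx
    rw [hψ, LinearMap.comp_apply, Submodule.coe_subtype, Submodule.mkQ_apply,
      ← Submodule.Quotient.mk_smul, smul_eq_mul]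
    have hz : x * (σ : R) = 0 := by
      have := Submodule.mem_annihilator.mp σ.2 x hx
      rw [smul_eq_mul] at this
      rw [mul_comm]; exact this
    rw [hz, Submodule.Quotient.mk_eq_zero]
    exact I.zero_mem
  set f : ↥((maximalIdeal R).annihilator) →ₗ[R] R ⧸ maximalIdeal R :=
    (eq2.symm.toLinearMap).comp (ψ.codRestrict S hψS) with hf
  have hVf1 : ∀ a : R, a ∈ maximalIdeal R →
      (∀ x, x ∈ maximalIdeal R → ∀ h : x * a ∈ (maximalIdeal R).annihilator,
        f ⟨x * a, h⟩ = 0) →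
      ∀ x ∈ maximalIdeal R, x * a ∈ I := by
    intro a ham hfa x hx
    have h := aux_mul_mem_soc hm3 hx ham
    have h0 : eq2.symm ((ψ.codRestrict S hψS) ⟨x * a, h⟩) = 0 := hfa x hx h
    have h1 : (ψ.codRestrict S hψS) ⟨x * a, h⟩ = 0 :=
      (LinearEquiv.map_eq_zero_iff eq2.symm).mp h0
    have h2 : ψ ⟨x * a, h⟩ = 0 := congrArg Subtype.val h1
    rwa [hψ, LinearMap.comp_apply, Submodule.coe_subtype, Submodule.mkQ_apply,
      Submodule.Quotient.mk_eq_zero] at h2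
  obtain ⟨s, hs1, hs2⟩ := hfin f
  set W : Ideal R :=
    { carrier := {a : R | a ∈ maximalIdeal R ∧ ∀ x ∈ maximalIdeal R, x * a ∈ I},
      zero_mem' := ⟨(maximalIdeal R).zero_mem, fun x _ => by
        rw [mul_zero]; exact I.zero_mem⟩,
      add_mem' := fun {a b} ha hb => ⟨(maximalIdeal R).add_mem ha.1 hb.1, fun x hx => by
        rw [mul_add]; exact I.add_mem (ha.2 x hx) (hb.2 x hx)⟩,
      smul_mem' := fun r a ha => ⟨by
          simpa using Ideal.mul_mem_left _ r ha.1, fun x hx => by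
        rw [smul_eq_mul, show x * (r * a) = r * (x * a) by ring]
        exact I.mul_mem_left r (ha.2 x hx)⟩ } with hW
  have hspanle : Submodule.span R
      (({a : R | a ∈ maximalIdeal R ∧
        ∀ x, x ∈ maximalIdeal R →
          ∀ h : x * a ∈ (maximalIdeal R).annihilator, f ⟨x * a, h⟩ = 0}) ∪ ↑s)
        ≤ W ⊔ Submodule.span R (↑s : Set R) := by
    rw [Submodule.span_union]
    refine sup_le_sup ?_ le_rfl
    rw [Submodule.span_le]
    intro a ha'
    exact ⟨ha'.1, hVf1 a ha'.1 ha'.2⟩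
  set χ : R →ₗ[R] (R ⧸ I) ⧸ S := S.mkQ.comp I.mkQ with hχ
  have hχsurj : Function.Surjective χ :=
    (Submodule.mkQ_surjective S).comp (Submodule.mkQ_surjective I)
  have hχS : ∀ b : R, (∀ x ∈ maximalIdeal R, x * b ∈ I) → χ b = 0 := by
    intro b hb
    rw [hχ, LinearMap.comp_apply, Submodule.mkQ_apply, Submodule.mkQ_apply,
      Submodule.Quotient.mk_eq_zero]
    apply hsub
    intro x hx
    rw [← Submodule.Quotient.mk_smul, smul_eq_mul,
      Submodule.Quotient.mk_eq_zero]
    exact hb x hx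
  have htorS : ∀ x ∈ maximalIdeal R, ∀ p : ↥S, x • p = 0 := fun x hx p =>
    Subtype.ext (hmS' x hx p p.2)
  haveI hfinS : Module.Finite R ↥S := Module.Finite.iff_fg.mpr ⟨{u}, by simpa using hspanu⟩
  haveI hartS : IsArtinian R ↥S := aux_artinian_of_finite htorS
  set M1 : Submodule R ((R ⧸ I) ⧸ S) := Submodule.map χ (maximalIdeal R) with hM1
  have hM1span : M1 = Submodule.span R (χ '' ↑s) := by
    apply le_antisymm
    · rintro _ ⟨a, ha, rfl⟩
      have h2 := hspanle (hs2 ha)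
      obtain ⟨w, hwW, b, hbs, rfl⟩ := Submodule.mem_sup.mp h2
      rw [map_add, hχS w hwW.2, zero_add]
      have : χ b ∈ Submodule.map χ (Submodule.span R (↑s : Set R)) :=
        Submodule.mem_map_of_mem hbs
      rwa [Submodule.map_span] at this
    · rw [Submodule.span_le]
      rintro _ ⟨b, hbs, rfl⟩
      exact Submodule.mem_map_of_mem (hs1 hbs)
  have htorM1 : ∀ x ∈ maximalIdeal R, ∀ p : ↥M1, x • p = 0 := by
    intro x hx p
    obtain ⟨a, ham, hpa⟩ := Submodule.mem_map.mp p.2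
    apply Subtype.ext
    show x • (p : (R ⧸ I) ⧸ S) = 0
    rw [← hpa, ← map_smul, smul_eq_mul]
    apply hχS
    intro y hy
    rw [aux_prod3 hm3 hy hx ham]
    exact I.zero_mem
  haveI hfinM1 : Module.Finite R ↥M1 := Module.Finite.iff_fg.mpr
    ⟨s.image (fun b => χ b), by rw [Finset.coe_image]; exact hM1span.symm⟩
  haveI hartM1 : IsArtinian R ↥M1 := aux_artinian_of_finite htorM1
  have htorQ : ∀ x ∈ maximalIdeal R, ∀ q : ((R ⧸ I) ⧸ S) ⧸ M1, x • q = 0 := by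
    intro x hx q
    obtain ⟨t, rfl⟩ := Submodule.mkQ_surjective M1 q
    obtain ⟨a, rfl⟩ := hχsurj t
    rw [← map_smul, ← map_smul, smul_eq_mul, Submodule.mkQ_apply,
      Submodule.Quotient.mk_eq_zero]
    exact Submodule.mem_map_of_mem (Ideal.mul_mem_right a _ hx)
  haveI hfinQ : Module.Finite R (((R ⧸ I) ⧸ S) ⧸ M1) :=
    Module.Finite.of_surjective (M1.mkQ.comp (S.mkQ.comp I.mkQ))
      ((Submodule.mkQ_surjective M1).comp hχsurj)
  haveI hartQ : IsArtinian R (((R ⧸ I) ⧸ S) ⧸ M1) := aux_artinian_of_finite htorQ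
  haveI h4 : IsArtinian R ((R ⧸ I) ⧸ S) :=
    (isArtinian_iff_submodule_quotient M1).mpr ⟨hartM1, hartQ⟩
  exact (isArtinian_iff_submodule_quotient S).mpr ⟨hartS, h4⟩
end

/-- For a commutative quasi-local ring `(R, 𝔪)` with socle `Soc(R) = Ann(𝔪)` and an
(`F = R/𝔪`-)linear map `f : Soc(R) → F`, the set `V_f = {a ∈ 𝔪 ∣ f(𝔪a) = 0}`. -/
def Vf (R : Type u) [CommRing R] [IsLocalRing R]
    (f : ↥((maximalIdeal R).annihilator) →ₗ[R] R ⧸ maximalIdeal R) : Set R :=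
  {a : R | a ∈ maximalIdeal R ∧
    ∀ x, x ∈ maximalIdeal R →
      ∀ h : x * a ∈ (maximalIdeal R).annihilator, f ⟨x * a, h⟩ = 0}

/-- Let `(R, 𝔪)` be a commutative quasi-local ring with residue field `F = R/𝔪` and
`𝔪³ = 0`.  Then `R` satisfies (⋄) (every cyclic `R`-module with essential simple socle
is Artinian) if and only if for every `F`-linear map `f : Soc(R) → F` the quotient
`𝔪/V_f` is a finite-dimensional `F`-vector space, i.e. there are finitely many
elements of `𝔪` which together with `V_f` span `𝔪`. -/
theorem diamond_iff_quot_Vf_finiteDimensional (R : Type u) [CommRing R]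
    [IsLocalRing R] (hm3 : maximalIdeal R ^ 3 = ⊥) :
    (∀ I : Ideal R,
        (∃ S : Submodule R (R ⧸ I), IsSimpleModule R S ∧
          ∀ N : Submodule R (R ⧸ I), N ≠ ⊥ → S ⊓ N ≠ ⊥) →
        IsArtinian R (R ⧸ I)) ↔
      (∀ f : ↥((maximalIdeal R).annihilator) →ₗ[R] R ⧸ maximalIdeal R,
        ∃ s : Finset R, ↑s ⊆ (maximalIdeal R : Set R) ∧
          (maximalIdeal R : Set R) ⊆ (Submodule.span R (Vf R f ∪ ↑s) : Set R)) := by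
  constructor
  · intro hdia f
    exact aux_forward hm3 hdia f
  · intro hfin I hex
    exact aux_backward hm3 hfin I hex
end
end

section
/- Let F be a field of characteristic zero, A = F[x], μ : A × A → A the multiplication, and f : A → F the linear map with f(x^n) = 1/(n+1) for all n ≥ 0. Then the kernel of f contains no nonzero ideal of A; equivalently, for every nonzero a ∈ A there exists m ≥ 0 with f(x^m · a) ≠ 0. -/
open Polynomial Finset

/-- Let `F` be a field of characteristic zero, `A = F[x]`, and `f : A → F` the linear
map with `f(xⁿ) = 1/(n+1)` for all `n ≥ 0`.  Then the kernel of `f` contains no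
nonzero ideal of `A`; equivalently, for every nonzero `a ∈ A` there exists `m ≥ 0`
with `f(xᵐ · a) ≠ 0`. -/
theorem hilbert_functional_kernel_contains_no_ideal (F : Type u) [Field F] [CharZero F]
    (f : Polynomial F →ₗ[F] F) (hf : ∀ n : ℕ, f (X ^ n) = ((n : F) + 1)⁻¹)
    (a : Polynomial F) (ha : a ≠ 0) :
    ∃ m : ℕ, f (X ^ m * a) ≠ 0 := by
  by_contra h
  push_neg at h
  set n := a.natDegree + 1 with hn
  have hcastne : ∀ m k : ℕ, ((m : F) + k + 1) ≠ 0 := by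
    intro m k
    have : ((m + k + 1 : ℕ) : F) ≠ 0 := Nat.cast_ne_zero.mpr (by omega)
    push_cast at this
    convert this using 1
  have hval : ∀ m : ℕ, ∑ k ∈ range n, a.coeff k * ((m : F) + k + 1)⁻¹ = 0 := by
    intro m
    have ha' : a = ∑ k ∈ range n, C (a.coeff k) * X ^ k := by
      conv_lhs => rw [as_sum_range' a n (by omega)]
      simp [C_mul_X_pow_eq_monomial]
    have key : f (X ^ m * a) = ∑ k ∈ range n, a.coeff k * ((m : F) + k + 1)⁻¹ := by
      conv_lhs => rw [ha', Finset.mul_sum, map_sum]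
      refine Finset.sum_congr rfl fun k _ => ?_
      have hre : X ^ m * (C (a.coeff k) * X ^ k) = a.coeff k • X ^ (m + k) := by
        rw [smul_eq_C_mul]; ring
      rw [hre, map_smul, hf, smul_eq_mul]
      push_cast
      ring_nf
    rw [← key, h m]
  set Q : Polynomial F := ∑ k ∈ range n, C (a.coeff k) *
      ∏ j ∈ (range n).erase k, (X + C ((j : F) + 1)) with hQ
  have hQeval : ∀ m : ℕ, Q.eval (m : F) = 0 := by
    intro m
    have e1 : Q.eval (m : F)
        = ∑ k ∈ range n, a.coeff k * ∏ j ∈ (range n).erase k, ((m : F) + j + 1) := by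
      rw [hQ, eval_finset_sum]
      refine Finset.sum_congr rfl fun k _ => ?_
      rw [eval_mul, eval_C, eval_prod]
      congr 1
      exact Finset.prod_congr rfl fun j _ => by rw [eval_add, eval_X, eval_C]; ring
    have e2 : ∀ k ∈ range n,
        a.coeff k * ∏ j ∈ (range n).erase k, ((m : F) + j + 1)
        = a.coeff k * ((m : F) + k + 1)⁻¹ * ∏ j ∈ range n, ((m : F) + j + 1) := by
      intro k hk
      rw [← Finset.mul_prod_erase (range n) (fun j => ((m : F) + j + 1)) hk]
      rw [mul_assoc, ← mul_assoc ((m:F)+k+1)⁻¹, inv_mul_cancel₀ (hcastne m k), one_mul]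
    rw [e1, Finset.sum_congr rfl e2, ← Finset.sum_mul, hval m, zero_mul]
  have hQ0 : Q = 0 := by
    apply Polynomial.eq_zero_of_infinite_isRoot
    apply Set.Infinite.mono (s := Set.range (Nat.cast : ℕ → F))
    · rintro x ⟨m, rfl⟩
      exact hQeval m
    · exact Set.infinite_range_of_injective Nat.cast_injective
  have hcoeff : ∀ k ∈ range n, a.coeff k = 0 := by
    intro k hk
    have he : Q.eval (-(k : F) - 1) = 0 := by rw [hQ0]; simp
    have e1 : Q.eval (-(k : F) - 1)
        = a.coeff k * ∏ j ∈ (range n).erase k, ((j : F) - k) := by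
      rw [hQ, eval_finset_sum]
      rw [Finset.sum_eq_single k]
      · rw [eval_mul, eval_C, eval_prod]
        congr 1
        refine Finset.prod_congr rfl fun j _ => ?_
        simp
        ring
      · intro k' _ hk'
        rw [eval_mul, eval_prod]
        have hkmem : k ∈ (range n).erase k' := Finset.mem_erase.mpr ⟨fun hkk => hk' hkk.symm, hk⟩
        rw [Finset.prod_eq_zero hkmem (by rw [eval_add, eval_X, eval_C]; ring), mul_zero]
      · intro hkn; exact absurd hk hkn
    have hprod : ∏ j ∈ (range n).erase k, ((j : F) - k) ≠ 0 := by
      apply Finset.prod_ne_zero_iff.mpr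
      intro j hj
      have hjk : j ≠ k := (Finset.mem_erase.mp hj).1
      have : (j : F) ≠ (k : F) := fun hc => hjk (Nat.cast_injective hc)
      exact sub_ne_zero.mpr this
    rw [e1] at he
    exact (mul_eq_zero.mp he).resolve_right hprod
  apply ha
  ext i
  rcases lt_or_ge i n with hi | hi
  · simpa using hcoeff i (Finset.mem_range.mpr hi)
  · simp [coeff_eq_zero_of_natDegree_lt (show a.natDegree < i by omega)]
end
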